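/- Let P ⊆ ℝ^d be a closed convex cone spanning ℝ^d with P ∩ (−P) = {0}, let Ω be the interior of P, and let A be a P-module. Then the set {f ∈ L²(ℝ^d) : there exists a ∈ Ω with f = 0 almost everywhere on (A − a)ᶜ} is dense in L²(ℝ^d). (This expresses that the left regular representation of ℝ^d on L²(ℝ^d) is the minimal unitary dilation of the isometric representation V^A.) -/

import Mathlib

open MeasureTheory

/-- Let `P ⊆ ℝ^d` be a closed convex cone spanning `ℝ^d` with `P ∩ (−P) = {0}`
and interior `Ω`, and let `A` be a `P`-module. Then the set of `f ∈ L²(ℝ^d)` vanishing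
a.e. outside `A − a` for some `a ∈ Ω` is dense in `L²(ℝ^d)`. -/
theorem dense_union_translates {d : ℕ}
    (P : Set (EuclideanSpace ℝ (Fin d)))
    (hPclosed : IsClosed P)
    (hPadd : ∀ x ∈ P, ∀ y ∈ P, x + y ∈ P)
    (hPsmul : ∀ (t : ℝ), 0 ≤ t → ∀ x ∈ P, t • x ∈ P)
    (hPspan : Submodule.span ℝ P = ⊤)
    (hPpointed : P ∩ (-P) = {0})
    (A : Set (EuclideanSpace ℝ (Fin d)))
    (hAne : A.Nonempty) (hAproper : A ≠ Set.univ) (hAclosed : IsClosed A)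
    (hAmod : ∀ x ∈ A, ∀ p ∈ P, x + p ∈ A) :
    Dense {f : Lp ℂ 2 (volume : Measure (EuclideanSpace ℝ (Fin d))) |
      ∃ a ∈ interior P, ∀ᵐ y ∂(volume : Measure (EuclideanSpace ℝ (Fin d))),
        y ∉ (fun x => x - a) '' A → f y = 0} := by
  -- degenerate case: subsingleton space
  rcases subsingleton_or_nontrivial (EuclideanSpace ℝ (Fin d)) with hsub | hnt
  · exfalso
    apply hAproper
    obtain ⟨x₀, hx₀⟩ := hAne
    exact Set.eq_univ_of_forall fun y => (Subsingleton.elim y x₀) ▸ hx₀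
  -- basic facts about P
  have hPne : P.Nonempty := by
    rcases P.eq_empty_or_nonempty with h | h
    · exfalso
      rw [h] at hPspan
      simp only [Submodule.span_empty] at hPspan
      exact bot_ne_top hPspan
    · exact h
  obtain ⟨xP, hxP⟩ := hPne
  have h0P : (0 : EuclideanSpace ℝ (Fin d)) ∈ P := by simpa using hPsmul 0 le_rfl xP hxP
  have hPconv : Convex ℝ P := fun x hx y hy a b ha hb _ =>
    hPadd _ (hPsmul a ha x hx) _ (hPsmul b hb y hy)
  -- interior of P is nonempty
  have hint : (interior P).Nonempty := by
    rw [hPconv.interior_nonempty_iff_affineSpan_eq_top]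
    rw [AffineSubspace.affineSpan_eq_top_iff_vectorSpan_eq_top_of_nonempty ℝ (EuclideanSpace ℝ (Fin d)) (EuclideanSpace ℝ (Fin d)) (s := P) ⟨0, h0P⟩]
    refine top_le_iff.mp ?_
    rw [← hPspan]
    refine Submodule.span_le.mpr fun x hx => ?_
    simpa using vsub_mem_vectorSpan ℝ hx h0P
  obtain ⟨a₀, ha₀⟩ := hint
  have ha₀P : a₀ ∈ P := interior_subset ha₀
  -- interior P is stable under adding elements of P
  have hstep : ∀ p ∈ P, ∀ x ∈ interior P, x + p ∈ interior P := by
    intro p hp x hx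
    have himg : (fun y => y + p) '' interior P ⊆ P := by
      rintro _ ⟨y, hy, rfl⟩
      exact hPadd y (interior_subset hy) p hp
    have hopen : IsOpen ((fun y => y + p) '' interior P) :=
      isOpenMap_add_right p _ isOpen_interior
    exact interior_maximal himg hopen ⟨x, hx, rfl⟩
  -- the sequence of translates
  set c : ℕ → EuclideanSpace ℝ (Fin d) := fun n => ((n : ℝ) + 1) • a₀ with hc
  have hcint : ∀ n, c n ∈ interior P := by
    intro n
    have h1 : (n : ℝ) • a₀ ∈ P := hPsmul _ (Nat.cast_nonneg n) _ ha₀P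
    have h2 : c n = a₀ + (n : ℝ) • a₀ := by
      simp only [hc, add_smul, one_smul]; abel
    rw [h2]
    exact hstep _ h1 _ ha₀
  set s : ℕ → Set (EuclideanSpace ℝ (Fin d)) := fun n => (fun y => y + c n) ⁻¹' A with hs
  have hsmeas : ∀ n, MeasurableSet (s n) :=
    fun n => (measurable_add_const (c n)) hAclosed.measurableSet
  have hsimg : ∀ n, (fun x => x - c n) '' A = s n := by
    intro n
    ext y
    constructor
    · rintro ⟨x, hx, rfl⟩
      simpa [hs, sub_add_cancel] using hx
    · intro hy
      exact ⟨y + c n, hy, add_sub_cancel_right y (c n)⟩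
  have hsmono : Monotone s := by
    refine monotone_nat_of_le_succ fun n => ?_
    intro y hy
    have hy' : y + c n ∈ A := hy
    have : (y + c n) + a₀ ∈ A := hAmod _ hy' _ ha₀P
    have hcsucc : c (n + 1) = c n + a₀ := by
      simp only [hc]
      push_cast
      rw [add_smul, one_smul]
    show y + c (n + 1) ∈ A
    rw [hcsucc, ← add_assoc]
    exact this
  have hsunion : (⋃ n, s n) = Set.univ := by
    refine Set.eq_univ_of_forall fun y => ?_
    obtain ⟨x₀, hx₀⟩ := hAne
    set v : EuclideanSpace ℝ (Fin d) := y - x₀ with hv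
    obtain ⟨ε, hε, hball⟩ := Metric.isOpen_iff.mp isOpen_interior a₀ ha₀
    obtain ⟨n, hn⟩ := exists_nat_gt (‖v‖ / ε)
    refine Set.mem_iUnion.mpr ⟨n, ?_⟩
    set t : ℝ := (n : ℝ) + 1 with ht
    have htpos : (0 : ℝ) < t := by positivity
    have hvt : ‖v‖ / t < ε := by
      rw [div_lt_iff₀ htpos]
      have h1 : ‖v‖ < ε * (n : ℝ) ∨ ‖v‖ ≤ 0 := by
        rcases le_or_gt ‖v‖ 0 with h | h
        · exact Or.inr h
        · left
          have : ‖v‖ / ε < n := hn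
          calc ‖v‖ = (‖v‖ / ε) * ε := by field_simp
          _ < (n : ℝ) * ε := by
            apply mul_lt_mul_of_pos_right hn hε
          _ = ε * n := mul_comm _ _
      rcases h1 with h | h
      · calc ‖v‖ < ε * n := h
        _ ≤ ε * t := by
            apply mul_le_mul_of_nonneg_left _ hε.le
            simp [ht]
      · calc ‖v‖ ≤ 0 := h
        _ < ε * t := by positivity
    have hmem : a₀ + t⁻¹ • v ∈ P := by
      apply interior_subset
      apply hball
      simp only [Metric.mem_ball, dist_eq_norm]
      rw [show a₀ + t⁻¹ • v - a₀ = t⁻¹ • v by abel]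
      rw [norm_smul, norm_inv, Real.norm_eq_abs, abs_of_pos htpos, ← div_eq_inv_mul]
      exact hvt
    have hp : c n + v ∈ P := by
      have := hPsmul t htpos.le _ hmem
      rwa [smul_add, smul_inv_smul₀ htpos.ne'] at this
    have : x₀ + (c n + v) ∈ A := hAmod _ hx₀ _ hp
    show y + c n ∈ A
    rw [show y + c n = x₀ + (c n + v) by rw [hv]; abel]
    exact this
  -- density argument
  rw [Metric.dense_iff]
  intro f r hr
  -- the finite measure with density ‖f‖²
  set ν : Measure (EuclideanSpace ℝ (Fin d)) := (volume : Measure (EuclideanSpace ℝ (Fin d))).withDensity (fun x => (‖f x‖₊ : ENNReal) ^ (2 : ℝ)) with hν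
  have hνmeas : Measurable fun x : EuclideanSpace ℝ (Fin d) => (‖f x‖₊ : ENNReal) ^ (2 : ℝ) := by
    apply Measurable.pow_const
    exact (Lp.stronglyMeasurable f).measurable.nnnorm.coe_nnreal_ennreal
  have hνfin : ν Set.univ < ⊤ := by
    rw [hν, withDensity_apply _ MeasurableSet.univ, Measure.restrict_univ]
    have hf2 : eLpNorm (⇑f) 2 (volume : Measure (EuclideanSpace ℝ (Fin d))) < ⊤ := (Lp.memLp f).2
    rw [eLpNorm_lt_top_iff_lintegral_rpow_enorm_lt_top (by norm_num) (by norm_num)] at hf2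
    simpa [enorm_eq_nnnorm] using hf2
  have hν_apply : ∀ n, ν (s n)ᶜ = ∫⁻ x in (s n)ᶜ, (‖f x‖₊ : ENNReal) ^ (2 : ℝ) ∂(volume : Measure (EuclideanSpace ℝ (Fin d))) := by
    intro n
    rw [hν, withDensity_apply _ (hsmeas n).compl]
  have htend : Filter.Tendsto (fun n => ν (s n)ᶜ) Filter.atTop (nhds 0) := by
    have h1 : Filter.Tendsto (ν ∘ fun n => (s n)ᶜ) Filter.atTop (nhds (ν (⋂ n, (s n)ᶜ))) := by
      apply tendsto_measure_iInter_atTop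
      · exact fun n => (hsmeas n).compl.nullMeasurableSet
      · exact fun m n hmn => Set.compl_subset_compl.mpr (hsmono hmn)
      · exact ⟨0, (lt_of_le_of_lt (measure_mono (Set.subset_univ _)) hνfin).ne⟩
    have h2 : (⋂ n, (s n)ᶜ) = ∅ := by
      rw [← Set.compl_iUnion, hsunion, Set.compl_univ]
    rw [h2] at h1
    simpa [Function.comp_def] using h1
  -- pick n with small tail
  have hrtop : (0 : ENNReal) < (ENNReal.ofReal r) ^ (2 : ℝ) := by
    apply ENNReal.rpow_pos
    · exact ENNReal.ofReal_pos.mpr hr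
    · exact ENNReal.ofReal_lt_top.ne
  obtain ⟨n, hn⟩ := (htend.eventually_lt_const hrtop).exists
  -- construct the approximant
  have hg : MemLp ((s n).indicator ⇑f) 2 (volume : Measure (EuclideanSpace ℝ (Fin d))) :=
    (Lp.memLp f).indicator (hsmeas n)
  refine ⟨hg.toLp _, ?_, ?_⟩
  · -- distance estimate
    rw [Metric.mem_ball, Lp.dist_def]
    have h1 : eLpNorm (⇑(hg.toLp _) - ⇑f) 2 (volume : Measure (EuclideanSpace ℝ (Fin d)))
        = eLpNorm ((s n)ᶜ.indicator ⇑f) 2 (volume : Measure (EuclideanSpace ℝ (Fin d))) := by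
      rw [← eLpNorm_neg]
      apply eLpNorm_congr_ae
      filter_upwards [hg.coeFn_toLp] with y hy
      simp only [Pi.neg_apply, Pi.sub_apply, hy, Set.indicator_compl, neg_sub]
    have h2 : eLpNorm ((s n)ᶜ.indicator ⇑f) 2 (volume : Measure (EuclideanSpace ℝ (Fin d))) = (ν (s n)ᶜ) ^ (2⁻¹ : ℝ) := by
      rw [eLpNorm_indicator_eq_eLpNorm_restrict (hsmeas n).compl,
        eLpNorm_eq_lintegral_rpow_enorm_toReal (by norm_num) (by norm_num), hν_apply n]
      norm_num [enorm_eq_nnnorm]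
    rw [h1, h2]
    apply ENNReal.toReal_lt_of_lt_ofReal
    rw [ENNReal.rpow_inv_lt_iff (by norm_num : (0:ℝ) < 2)]
    exact hn
  · -- membership in the set
    refine ⟨c n, hcint n, ?_⟩
    filter_upwards [hg.coeFn_toLp] with y hy hnotin
    rw [hsimg n] at hnotin
    rw [hy]
    exact Set.indicator_of_notMem hnotin _
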